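/- If t and a are nonnegative integers with n = t + 2a + 2 and t ≥ ⌊n/2⌋, then any path from state 0 back to state 0 of length n in the schematic automaton M_{t,a} traverses the cycle (0,1,…,t,0) exactly once. -/
import Mathlib


/-- The edge relation of the schematic automaton M_{t,a} on states {0, …, t+a}:
edges (i,i+1) for i < t+a, the self-loop (t+a,t+a), edges (i,i−1) for t+1 ≤ i ≤ t+a,
and the edge (t,0). -/
def MtaEdge (t a i j : ℕ) : Prop :=
  (i < t + a ∧ j = i + 1) ∨ (i = t + a ∧ j = t + a) ∨
  (t + 1 ≤ i ∧ i ≤ t + a ∧ j + 1 = i) ∨ (i = t ∧ j = 0)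

/-- If n = t + 2a + 2 and t ≥ ⌊n/2⌋, then any closed walk of length n from state 0 to
state 0 in M_{t,a} traverses the cycle (0,1,…,t,0), i.e., uses the edge (t,0),
exactly once. -/
theorem cycle_traversed_once (t a n : ℕ) (hn : n = t + 2 * a + 2) (ht : n / 2 ≤ t)
    (p : Fin (n + 1) → ℕ) (h0 : p 0 = 0) (hlast : p (Fin.last n) = 0)
    (hedge : ∀ i : Fin n, MtaEdge t a (p i.castSucc) (p i.succ)) :
    (Finset.univ.filter (fun i : Fin n => p i.castSucc = t ∧ p i.succ = 0)).card = 1 := by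
  have ht' : 2 * a + 1 ≤ t := by omega
  have hnpos : 1 ≤ n := by omega
  set S : Finset (Fin n) :=
    Finset.univ.filter (fun i : Fin n => p i.castSucc = t ∧ p i.succ = 0) with hS
  -- c ≥ 1 : the last step enters 0, and the only edge into 0 is (t,0)
  have hA : ∀ x : ℕ, MtaEdge t a x 0 → x = t := by
    intro x hx
    simp only [MtaEdge] at hx
    omega
  obtain ⟨i0, hi0succ⟩ : ∃ i0 : Fin n, i0.succ = Fin.last n :=
    ⟨⟨n - 1, by omega⟩, by apply Fin.ext; simp; omega⟩
  have hmem : i0 ∈ S := by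
    have hsucc0 : p i0.succ = 0 := by rw [hi0succ]; exact hlast
    refine Finset.mem_filter.mpr ⟨Finset.mem_univ _, ?_, hsucc0⟩
    have hedge0 := hedge i0
    rw [hsucc0] at hedge0
    exact hA _ hedge0
  have hc1 : 1 ≤ S.card := Finset.card_pos.mpr ⟨_, hmem⟩
  -- telescoping sum
  have hle : ∀ k : ℕ, k ≤ n → k < n + 1 := fun k hk => Nat.lt_succ_of_le hk
  set q : ℕ → ℤ := fun k => (p ⟨min k n, hle _ (min_le_right _ _)⟩ : ℤ) with hq
  have hqd : ∀ i : Fin n, ((p i.succ : ℤ) - (p i.castSucc : ℤ)) = q (↑i + 1) - q ↑i := by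
    intro i
    have hlt := i.isLt
    have h1 : (⟨min (↑i + 1) n, hle _ (min_le_right _ _)⟩ : Fin (n + 1)) = i.succ := by
      apply Fin.ext; simp only [Fin.val_succ]; omega
    have h2 : (⟨min (↑i : ℕ) n, hle _ (min_le_right _ _)⟩ : Fin (n + 1)) = i.castSucc := by
      apply Fin.ext; simp only [Fin.coe_castSucc]; omega
    simp only [hq, h1, h2]
  have htel : ∑ i : Fin n, ((p i.succ : ℤ) - (p i.castSucc : ℤ)) = 0 := by
    calc ∑ i : Fin n, ((p i.succ : ℤ) - (p i.castSucc : ℤ))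
        = ∑ i : Fin n, (q (↑i + 1) - q ↑i) := Finset.sum_congr rfl (fun i _ => hqd i)
      _ = ∑ k ∈ Finset.range n, (q (k + 1) - q k) :=
          Fin.sum_univ_eq_sum_range (fun k => q (k + 1) - q k) n
      _ = q n - q 0 := Finset.sum_range_sub q n
      _ = 0 := by
          have hn0 : q n = 0 := by
            have he : (⟨min n n, hle _ (min_le_right _ _)⟩ : Fin (n + 1)) = Fin.last n := by
              apply Fin.ext; simp [Fin.val_last]
            simp only [hq]; rw [he, hlast]; norm_num
          have h00 : q 0 = 0 := by
            have he : (⟨min 0 n, hle _ (min_le_right _ _)⟩ : Fin (n + 1)) = 0 := by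
              apply Fin.ext; simp
            simp only [hq]; rw [he, h0]; norm_num
          rw [hn0, h00]; ring
  -- split the sum over S and its complement
  have hsplit := Finset.sum_filter_add_sum_filter_not Finset.univ
    (fun i : Fin n => p i.castSucc = t ∧ p i.succ = 0)
    (fun i : Fin n => ((p i.succ : ℤ) - (p i.castSucc : ℤ)))
  have hSsum : ∑ i ∈ S, ((p i.succ : ℤ) - (p i.castSucc : ℤ)) = -(S.card * t) := by
    have heach : ∀ i ∈ S, ((p i.succ : ℤ) - (p i.castSucc : ℤ)) = -(t : ℤ) := by
      intro i hi
      obtain ⟨-, h1, h2⟩ := Finset.mem_filter.mp hi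
      rw [h1, h2]; push_cast; ring
    rw [Finset.sum_congr rfl heach, Finset.sum_const, nsmul_eq_mul]; ring
  have hdle : ∀ i : Fin n, ((p i.succ : ℤ) - (p i.castSucc : ℤ)) ≤ 1 := by
    intro i
    have := hedge i
    simp only [MtaEdge] at this
    omega
  have hTcard : (Finset.univ.filter
      (fun i : Fin n => ¬(p i.castSucc = t ∧ p i.succ = 0))).card = n - S.card := by
    have := Finset.card_filter_add_card_filter_not (s := (Finset.univ : Finset (Fin n)))
      (p := fun i : Fin n => p i.castSucc = t ∧ p i.succ = 0)
    simp only [Finset.card_univ, Fintype.card_fin] at this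
    rw [← hS] at this
    omega
  have hTsum : ∑ i ∈ Finset.univ.filter
      (fun i : Fin n => ¬(p i.castSucc = t ∧ p i.succ = 0)),
      ((p i.succ : ℤ) - (p i.castSucc : ℤ)) ≤ (n - S.card : ℕ) := by
    calc ∑ i ∈ Finset.univ.filter (fun i : Fin n => ¬(p i.castSucc = t ∧ p i.succ = 0)),
          ((p i.succ : ℤ) - (p i.castSucc : ℤ))
        ≤ ∑ _i ∈ Finset.univ.filter (fun i : Fin n => ¬(p i.castSucc = t ∧ p i.succ = 0)),
          (1 : ℤ) := Finset.sum_le_sum (fun i _ => hdle i)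
      _ = ((Finset.univ.filter
            (fun i : Fin n => ¬(p i.castSucc = t ∧ p i.succ = 0))).card : ℤ) := by simp
      _ = ((n - S.card : ℕ) : ℤ) := by rw [hTcard]
  -- conclude (t+1) * c ≤ n, hence c ≤ 1
  have hkey : (S.card : ℤ) * t ≤ ((n - S.card : ℕ) : ℤ) := by
    have : -(S.card * (t : ℤ)) + ∑ i ∈ Finset.univ.filter
        (fun i : Fin n => ¬(p i.castSucc = t ∧ p i.succ = 0)),
        ((p i.succ : ℤ) - (p i.castSucc : ℤ)) = 0 := by
      rw [← hSsum]
      rw [← htel] at *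
      exact hsplit
    omega
  have hcn : S.card ≤ n := Finset.card_le_univ S |>.trans (by simp)
  have hkey' : S.card * t ≤ n - S.card := by exact_mod_cast hkey
  rcases Nat.lt_or_ge S.card 2 with h | h
  · omega
  · exfalso
    have h2t : 2 * t ≤ S.card * t := Nat.mul_le_mul_right t h
    omega
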